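/- Under the CA-OCRDC recursion with predictors satisfying Assumption 1, for any erasure sequence, any sequence of source symbols, any target distortion D ∈ (0, D_max], any ε ∈ (0, D), and any adjustment sequence with δ^tgt_t ≤ D − ε for all t, the parameter sequence satisfies λ_t ≤ L/ε + η(D_max − ε) for all t ≥ 1. (Lemma 2, CA-OCRDC case) -/
import Mathlib


/-- **Lemma 2, CA-OCRDC case (parameter upper bound under erasures).**
Under the CA-OCRDC recursion (slope `s t = max 0 (lam t)`, `X̃ t` a minimizer of
`−log p̂_t(x̃) + s_t d(X_t, x̃)`, update
`lam (t+1) = lam t + η (d(X_t, X̃_t) − D + δ^tgt_t)`) with predictors satisfying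
Assumption 1, for any erasure sequence, any source symbols, any `D ∈ (0, D_max]`,
any `ε ∈ (0, D)`, and any adjustment sequence with `δ^tgt_t ≤ D − ε`, the parameter
sequence satisfies `lam t ≤ L/ε + η (D_max − ε)` for all `t ≥ 1`. -/
theorem ca_ocrdc_lambda_upper_bound
    {𝒳 : Type*} [Fintype 𝒳] [Nonempty 𝒳]
    (Dmax : ℝ) (hDmax : 0 < Dmax)
    (d : 𝒳 → 𝒳 → ℝ) (hd : ∀ x y, 0 ≤ d x y ∧ d x y ≤ Dmax) (hdd : ∀ x, d x x = 0)
    (X Xtil : ℕ → 𝒳) (p : ℕ → 𝒳 → ℝ)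
    (hp : ∀ t x, 0 < p t x ∧ p t x ≤ 1) (hp1 : ∀ t, ∑ x, p t x = 1)
    (L : ℝ) (hL : ∀ t x, -Real.log (p t x) < L)
    (D ε : ℝ) (hD : 0 < D ∧ D ≤ Dmax) (hε : 0 < ε ∧ ε < D)
    (δtgt : ℕ → ℝ) (hδtgt : ∀ t, 1 ≤ t → δtgt t ≤ D - ε)
    (η : ℝ) (hη : 0 < η)
    (lam₀ : ℝ) (hlam₀ : 0 < lam₀ ∧ lam₀ ≤ L / ε + η * (Dmax - ε))
    (lam s : ℕ → ℝ) (hinit : lam 1 = lam₀)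
    (hs : ∀ t, s t = max 0 (lam t))
    (hmin : ∀ t, 1 ≤ t → ∀ x,
      -Real.log (p t (Xtil t)) + s t * d (X t) (Xtil t)
        ≤ -Real.log (p t x) + s t * d (X t) x)
    (hupd : ∀ t, 1 ≤ t →
      lam (t + 1) = lam t + η * (d (X t) (Xtil t) - D + δtgt t)) :
    ∀ t, 1 ≤ t → lam t ≤ L / ε + η * (Dmax - ε) := by

  have hε0 := hε.1
  have hL0 : 0 < L := by
    obtain ⟨x₀⟩ := (inferInstance : Nonempty 𝒳)
    have h1 := hL 1 x₀
    have h2 : Real.log (p 1 x₀) ≤ 0 := Real.log_nonpos (hp 1 x₀).1.le (hp 1 x₀).2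
    linarith
  intro t ht
  induction t, ht using Nat.le_induction with
  | base => rw [hinit]; exact hlam₀.2
  | succ n hn ih =>
    have hupdn := hupd n hn
    have hdXX := hd (X n) (Xtil n)
    have hδ := hδtgt n hn
    by_cases hc : lam n ≤ L / ε
    · rw [hupdn]
      nlinarith [hε.2, hD.2]
    · push_neg at hc
      have hlampos : 0 < lam n := lt_trans (by positivity) hc
      have hsn : s n = lam n := by rw [hs n]; exact max_eq_right hlampos.le
      have hmin' := hmin n hn (X n)
      rw [hdd (X n), hsn] at hmin'
      have hlog1 : Real.log (p n (Xtil n)) ≤ 0 :=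
        Real.log_nonpos (hp n (Xtil n)).1.le (hp n (Xtil n)).2
      have hLbd := hL n (X n)
      -- lam n * d ≤ L
      have hld : lam n * d (X n) (Xtil n) ≤ L := by nlinarith
      have hlε : L < lam n * ε := by
        have := (div_lt_iff₀ hε0).mp hc
        linarith
      have hdlt : d (X n) (Xtil n) < ε := by nlinarith
      rw [hupdn]
      nlinarith
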